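/- For n ≥ 1, the number of distinct net-degree sequences of bidirected graphs on vertex set [n] equals ((2n−1)^n + 1)/2. -/

import Mathlib

/-- A bidirected graph (bigraph) on vertex set `Fin n`, encoded by its bidirection
function: `bd u v` is the local orientation `τ(u, uv) ∈ {−1,+1}` of the edge `uv` at its
endpoint `u` if `uv` is an edge, and `0` if `u` and `v` are not joined by an edge. -/
structure Bigraph (n : ℕ) where
  bd : Fin n → Fin n → ℤ
  bd_mem : ∀ u v, bd u v = -1 ∨ bd u v = 0 ∨ bd u v = 1
  loopless : ∀ v, bd v v = 0
  adj_symm : ∀ u v, bd u v = 0 ↔ bd v u = 0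

/-- The net-degree of a node `v`: the sum of the local orientations at `v` of all edges
incident to `v`. -/
def Bigraph.netDeg {n : ℕ} (B : Bigraph n) (v : Fin n) : ℤ := ∑ u, B.bd v u

open Finset

private lemma bgaux_int_even_cast (x : ℤ) : Even x ↔ (x : ZMod 2) = 0 := by
  rw [ZMod.intCast_zmod_eq_zero_iff_dvd, even_iff_two_dvd]; norm_num

private lemma bgaux_nat_even_cast (x : ℕ) : Even x ↔ (x : ZMod 2) = 0 := by
  rw [ZMod.natCast_eq_zero_iff, even_iff_two_dvd]

private lemma bgaux_even_sum_int {ι : Type*} (s : Finset ι) (f : ι → ℤ)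
    (h : Even (∑ i ∈ s, f i)) [DecidablePred fun x => ¬ Even (f x)] :
    Even (s.filter fun x => ¬ Even (f x)).card := by
  rw [bgaux_int_even_cast] at h
  rw [bgaux_nat_even_cast]
  push_cast at h
  have : ∀ i ∈ s, (f i : ZMod 2) = if Even (f i) then 0 else 1 := by
    intro i _
    split
    · rwa [← bgaux_int_even_cast]
    · rename_i hodd
      rw [Int.not_even_iff_odd] at hodd
      obtain ⟨k, hk⟩ := hodd
      rw [hk]
      push_cast
      rw [show (2 : ZMod 2) = 0 by decide]
      ring
  rw [Finset.sum_congr rfl this, Finset.sum_ite, Finset.sum_const, Finset.sum_const] at h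
  simpa using h

private lemma bgaux_netDeg_le {n : ℕ} (B : Bigraph n) (v : Fin n) :
    B.netDeg v ≤ (n : ℤ) - 1 := by
  have h : B.netDeg v ≤ ∑ u : Fin n, (if u = v then (0:ℤ) else 1) := by
    apply Finset.sum_le_sum
    intro u _
    by_cases hu : u = v
    · simp [hu, B.loopless v]
    · simp only [hu, if_false]
      rcases B.bd_mem v u with h | h | h <;> omega
  calc B.netDeg v ≤ _ := h
    _ = (n:ℤ) - 1 := by
      have key : ∀ u : Fin n, (if u = v then (0:ℤ) else 1) = 1 - (if u = v then (1:ℤ) else 0) := by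
        intro u; split <;> ring
      rw [Finset.sum_congr rfl (fun u _ => key u), Finset.sum_sub_distrib,
        Finset.sum_ite_eq' univ v (fun _ => (1:ℤ))]
      simp [mul_comm]

private lemma bgaux_netDeg_ge {n : ℕ} (B : Bigraph n) (v : Fin n) :
    -(n : ℤ) + 1 ≤ B.netDeg v := by
  have h : ∑ u : Fin n, (if u = v then (0:ℤ) else -1) ≤ B.netDeg v := by
    apply Finset.sum_le_sum
    intro u _
    by_cases hu : u = v
    · simp [hu, B.loopless v]
    · simp only [hu, if_false]
      rcases B.bd_mem v u with h | h | h <;> omega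
  calc -(n:ℤ) + 1 = ∑ u : Fin n, (if u = v then (0:ℤ) else -1) := by
        have key : ∀ u : Fin n, (if u = v then (0:ℤ) else -1)
            = -1 + (if u = v then (1:ℤ) else 0) := by
          intro u; split <;> ring
        rw [Finset.sum_congr rfl (fun u _ => key u), Finset.sum_add_distrib,
          Finset.sum_ite_eq' univ v (fun _ => (1:ℤ))]
        simp [mul_comm]
    _ ≤ B.netDeg v := h

private lemma bgaux_even_sum_netDeg {n : ℕ} (B : Bigraph n) : Even (∑ v, B.netDeg v) := by
  rw [bgaux_int_even_cast]
  unfold Bigraph.netDeg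
  push_cast
  set c : Fin n → Fin n → ZMod 2 := fun v u => (B.bd v u : ZMod 2) with hc
  have key : ∀ v u, c v u = if B.bd v u = 0 then 0 else 1 := by
    intro v u
    rcases B.bd_mem v u with h | h | h <;> simp [hc, h] <;> decide
  have csymm : ∀ v u, c v u = c u v := by
    intro v u
    rw [key, key]
    simp only [B.adj_symm v u]
  have cdiag : ∀ v, c v v = 0 := by intro v; simp [hc, B.loopless]
  show ∑ v, ∑ u, c v u = 0
  rw [← Finset.sum_product']
  have split1 := Finset.sum_filter_add_sum_filter_not ((univ ×ˢ univ) : Finset (Fin n × Fin n))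
    (fun p => p.1 < p.2) (fun p => c p.1 p.2)
  have split2 := Finset.sum_filter_add_sum_filter_not
    (((univ ×ˢ univ) : Finset (Fin n × Fin n)).filter (fun p => ¬ p.1 < p.2))
    (fun p => p.2 < p.1) (fun p => c p.1 p.2)
  have heq : ∑ p ∈ (((univ ×ˢ univ) : Finset (Fin n × Fin n)).filter (fun p => ¬ p.1 < p.2)).filter
      (fun p => p.2 < p.1), c p.1 p.2
      = ∑ p ∈ ((univ ×ˢ univ) : Finset (Fin n × Fin n)).filter (fun p => p.1 < p.2), c p.1 p.2 := by
    apply Finset.sum_nbij' (i := Prod.swap) (j := Prod.swap)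
    · intro a ha; simp at ha ⊢; omega
    · intro a ha; simp at ha ⊢; omega
    · intro a _; simp
    · intro a _; simp
    · intro a _; simp [csymm]
  have hzero : ∑ p ∈ (((univ ×ˢ univ) : Finset (Fin n × Fin n)).filter (fun p => ¬ p.1 < p.2)).filter
      (fun p => ¬ p.2 < p.1), c p.1 p.2 = 0 := by
    apply Finset.sum_eq_zero
    intro p hp
    simp only [Finset.mem_filter] at hp
    have : p.1 = p.2 := le_antisymm (not_lt.mp hp.2) (not_lt.mp hp.1.2)
    rw [this, cdiag]
  have htot : ∑ p ∈ ((univ ×ˢ univ) : Finset (Fin n × Fin n)), c p.1 p.2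
      = (∑ p ∈ ((univ ×ˢ univ) : Finset (Fin n × Fin n)).filter (fun p => p.1 < p.2), c p.1 p.2)
      + (∑ p ∈ ((univ ×ˢ univ) : Finset (Fin n × Fin n)).filter (fun p => p.1 < p.2), c p.1 p.2) := by
    rw [← split1, ← split2, heq, hzero]; ring
  rw [htot, CharTwo.add_self_eq_zero]

private lemma bgaux_exists_pairing {α : Type*} [DecidableEq α] (s : Finset α)
    (hs : Even s.card) :
    ∃ m : α → α, (∀ v ∈ s, m v ∈ s ∧ m v ≠ v ∧ m (m v) = v) ∧ ∀ v ∉ s, m v = v := by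
  induction s using Finset.strongInduction with
  | _ s ih =>
    rcases s.eq_empty_or_nonempty with rfl | ⟨a, ha⟩
    · exact ⟨id, by simp, fun v _ => rfl⟩
    · have h2 : 2 ≤ s.card := by
        rcases hs with ⟨k, hk⟩
        have : 1 ≤ s.card := Finset.card_pos.mpr ⟨a, ha⟩
        omega
      have hne : (s.erase a).Nonempty := by
        rw [← Finset.card_pos, Finset.card_erase_of_mem ha]; omega
      obtain ⟨b, hb⟩ := hne
      have hba : b ≠ a := Finset.ne_of_mem_erase hb
      have hbs : b ∈ s := Finset.mem_of_mem_erase hb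
      set s' := (s.erase a).erase b with hs'def
      have hsub : s' ⊂ s := by
        apply Finset.ssubset_of_subset_of_ssubset (Finset.erase_subset _ _)
        exact Finset.erase_ssubset ha
      have hcard : s'.card = s.card - 2 := by
        rw [hs'def, Finset.card_erase_of_mem hb, Finset.card_erase_of_mem ha]; omega
      have hs'even : Even s'.card := by
        rcases hs with ⟨k, hk⟩; rw [hcard]; exact ⟨k - 1, by omega⟩
      obtain ⟨m, hm, hm'⟩ := ih s' hsub hs'even
      have has' : a ∉ s' := by simp [hs'def]
      have hbs' : b ∉ s' := by simp [hs'def]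
      refine ⟨fun v => if v = a then b else if v = b then a else m v, ?_, ?_⟩
      · intro v hv
        by_cases hva : v = a
        · subst hva
          refine ⟨?_, ?_, ?_⟩ <;> simp [hba, hbs]
        · by_cases hvb : v = b
          · subst hvb
            refine ⟨?_, ?_, ?_⟩ <;> simp [hba, Ne.symm hba, ha]
          · have hvs' : v ∈ s' := by
              rw [hs'def]; exact Finset.mem_erase.mpr ⟨hvb, Finset.mem_erase.mpr ⟨hva, hv⟩⟩
            obtain ⟨h1, h2, h3⟩ := hm v hvs'
            have hma : m v ≠ a := fun h => has' (h ▸ h1)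
            have hmb : m v ≠ b := fun h => hbs' (h ▸ h1)
            simp only [if_neg hva, if_neg hvb, if_neg hma, if_neg hmb]
            exact ⟨(Finset.mem_of_mem_erase (Finset.mem_of_mem_erase h1)), h2, h3⟩
      · intro v hv
        have hva : v ≠ a := fun h => hv (h ▸ ha)
        have hvb : v ≠ b := fun h => hv (h ▸ hbs)
        have hvs' : v ∉ s' := fun h => hv (Finset.mem_of_mem_erase (Finset.mem_of_mem_erase h))
        simp only [if_neg hva, if_neg hvb]
        exact hm' v hvs'

private lemma bgaux_exists_bigraph {n : ℕ} (d : Fin n → ℤ)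
    (hb : ∀ v, -(n:ℤ) + 1 ≤ d v ∧ d v ≤ (n:ℤ) - 1)
    (he : Even (∑ v, d v)) : ∃ B : Bigraph n, B.netDeg = d := by
  classical
  set S : Finset (Fin n) := univ.filter (fun v => ¬ Even (d v + n - 1)) with hS
  have hSeven : Even S.card := by
    have h1 : Even (∑ v : Fin n, (d v + n - 1)) := by
      have hsum : ∑ v : Fin n, (d v + (n:ℤ) - 1) = (∑ v, d v) + n * ((n:ℤ) - 1) := by
        rw [show (fun v : Fin n => d v + (n:ℤ) - 1) = (fun v => d v + ((n:ℤ) - 1)) by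
          funext v; ring]
        rw [Finset.sum_add_distrib, Finset.sum_const, Finset.card_univ, Fintype.card_fin,
          nsmul_eq_mul]
      rw [hsum]
      apply Even.add he
      have h := Int.even_mul_succ_self ((n:ℤ) - 1)
      rwa [show ((n:ℤ)-1)*((n:ℤ)-1+1) = (n:ℤ) * ((n:ℤ) - 1) by ring] at h
    exact bgaux_even_sum_int univ (fun v => d v + n - 1) h1
  obtain ⟨m, hm, hm'⟩ := bgaux_exists_pairing S hSeven
  have minv : ∀ v, m (m v) = v := by
    intro v
    by_cases h : v ∈ S
    · exact (hm v h).2.2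
    · rw [hm' v h, hm' v h]
  have hsymm : ∀ u v : Fin n, u = m v ↔ v = m u :=
    fun u v => ⟨fun h => by rw [h, minv], fun h => by rw [h, minv]⟩
  set A : Fin n → Finset (Fin n) := fun v => univ.filter (fun u => u ≠ v ∧ u ≠ m v) with hA
  have hAmem : ∀ v u, u ∈ A v ↔ (u ≠ v ∧ u ≠ m v) := by intro v u; simp [hA]
  have hAsymm : ∀ v u, u ∈ A v ↔ v ∈ A u := by
    intro v u
    rw [hAmem, hAmem]
    constructor <;> rintro ⟨h1, h2⟩
    · exact ⟨Ne.symm h1, fun h => h2 ((hsymm u v).mpr h)⟩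
    · exact ⟨Ne.symm h1, fun h => h2 ((hsymm v u).mpr h)⟩
  have hAcard : ∀ v, (v ∈ S → ((A v).card : ℤ) = (n:ℤ) - 2) ∧
      (v ∉ S → ((A v).card : ℤ) = (n:ℤ) - 1) := by
    intro v
    constructor
    · intro hv
      obtain ⟨h1, h2, h3⟩ := hm v hv
      have hAv : A v = univ \ {v, m v} := by
        ext u; simp [hA, not_or]
      have hn2 : 2 ≤ n := by
        have := Fintype.one_lt_card_iff.mpr ⟨m v, v, h2⟩
        simp at this; omega
      have : (A v).card = n - 2 := by
        rw [hAv, Finset.card_sdiff_of_subset (Finset.subset_univ _), Finset.card_univ, Fintype.card_fin,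
          Finset.card_pair (Ne.symm h2)]
      omega
    · intro hv
      have hmv : m v = v := hm' v hv
      have hAv : A v = univ \ {v} := by
        ext u; simp [hA, hmv]
      have hn1 : 1 ≤ n := v.pos
      have : (A v).card = n - 1 := by
        rw [hAv, Finset.card_sdiff_of_subset (Finset.subset_univ _), Finset.card_univ, Fintype.card_fin,
          Finset.card_singleton]
      omega
  have hkey : ∀ v, Even (((A v).card : ℤ) + d v) ∧ -((A v).card : ℤ) ≤ d v ∧
      d v ≤ ((A v).card : ℤ) := by
    intro v
    have hb' := hb v
    by_cases hv : v ∈ S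
    · rw [(hAcard v).1 hv]
      have hodd : ¬ Even (d v + n - 1) := by
        rw [hS] at hv; simpa using hv
      rw [Int.not_even_iff_odd] at hodd
      obtain ⟨k, hk⟩ := hodd
      refine ⟨⟨k, by omega⟩, by omega, by omega⟩
    · rw [(hAcard v).2 hv]
      have heven : Even (d v + n - 1) := by
        rw [hS] at hv; simpa using hv
      obtain ⟨k, hk⟩ := heven
      refine ⟨⟨k, by omega⟩, by omega, by omega⟩
  set p : Fin n → ℕ := fun v => (((A v).card : ℤ) + d v).toNat / 2 with hp
  have h2p : ∀ v, 2 * (p v : ℤ) = ((A v).card : ℤ) + d v := by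
    intro v
    obtain ⟨⟨k, hk⟩, h1, h2⟩ := hkey v
    simp only [hp]
    omega
  have hple : ∀ v, p v ≤ (A v).card := by
    intro v
    obtain ⟨⟨k, hk⟩, h1, h2⟩ := hkey v
    have := h2p v
    omega
  refine ⟨⟨fun v u => if h : u ∈ A v then
      (if (((A v).orderIsoOfFin rfl).symm ⟨u, h⟩ : ℕ) < p v then (1:ℤ) else -1) else 0,
      ?_, ?_, ?_⟩, ?_⟩
  · intro u v
    by_cases h : v ∈ A u
    · rw [dif_pos h]; split_ifs <;> simp
    · rw [dif_neg h]; simp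
  · intro v
    have : v ∉ A v := by rw [hAmem]; simp
    exact dif_neg this
  · have key0 : ∀ a b : Fin n, (if h : b ∈ A a then
        (if (((A a).orderIsoOfFin rfl).symm ⟨b, h⟩ : ℕ) < p a then (1:ℤ) else -1) else 0) = 0
        ↔ b ∉ A a := by
      intro a b
      by_cases h : b ∈ A a
      · rw [dif_pos h]; split_ifs <;> simp [h]
      · rw [dif_neg h]; simp [h]
    intro u v
    rw [key0, key0]
    rw [not_iff_not]
    exact hAsymm u v
  · funext v
    unfold Bigraph.netDeg
    dsimp only
    rw [← Finset.sum_subset (Finset.subset_univ (A v)) (fun u _ hu => dif_neg hu)]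
    rw [← Finset.sum_attach (A v) (fun u => if h : u ∈ A v then
      (if (((A v).orderIsoOfFin rfl).symm ⟨u, h⟩ : ℕ) < p v then (1:ℤ) else -1) else 0)]
    have step1 : ∀ x : {u // u ∈ A v}, (if h : (x:Fin n) ∈ A v then
        (if (((A v).orderIsoOfFin rfl).symm ⟨(x:Fin n), h⟩ : ℕ) < p v then (1:ℤ) else -1) else 0)
        = (if ((((A v).orderIsoOfFin rfl).symm x : Fin (A v).card) : ℕ) < p v
            then (1:ℤ) else -1) := by
      intro x
      rw [dif_pos x.2]
    rw [Finset.sum_congr rfl (fun x _ => step1 x)]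
    rw [← Finset.univ_eq_attach]
    rw [← Equiv.sum_comp ((A v).orderIsoOfFin rfl).toEquiv
      (fun x => if ((((A v).orderIsoOfFin rfl).symm x : Fin (A v).card) : ℕ) < p v
        then (1:ℤ) else -1)]
    simp only [RelIso.coe_fn_toEquiv, OrderIso.symm_apply_apply]
    rw [Fin.sum_univ_eq_sum_range (fun i => if i < p v then (1:ℤ) else -1) ((A v).card)]
    rw [Finset.sum_ite, Finset.sum_const, Finset.sum_const]
    have hf1 : ((Finset.range ((A v).card)).filter (fun i => i < p v)) = Finset.range (p v) := by
      ext i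
      simp only [Finset.mem_filter, Finset.mem_range]
      have := hple v
      omega
    have hf2 : ((Finset.range ((A v).card)).filter (fun i => ¬ i < p v))
        = Finset.Ico (p v) ((A v).card) := by
      ext i
      simp only [Finset.mem_filter, Finset.mem_range, Finset.mem_Ico]
      omega
    rw [hf1, hf2, Finset.card_range, Nat.card_Ico]
    have h2 := h2p v
    have h3 := hple v
    simp only [nsmul_eq_mul, mul_one, mul_neg_one]
    push_cast
    omega

private lemma bgaux_negOnePow_sum {ι : Type*} (s : Finset ι) (f : ι → ℤ) :
    (((∑ i ∈ s, f i).negOnePow : ℤˣ) : ℤ) = ∏ i ∈ s, (((f i).negOnePow : ℤˣ) : ℤ) := by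
  induction s using Finset.cons_induction with
  | empty => simp
  | cons a s ha ih =>
    rw [Finset.sum_cons, Finset.prod_cons, Int.negOnePow_add, Units.val_mul, ih]

private lemma bgaux_sum_negOnePow_Icc (m : ℕ) :
    ∑ x ∈ Finset.Icc (-(m:ℤ)) (m:ℤ), ((x.negOnePow : ℤˣ) : ℤ) = (-1)^m := by
  induction m with
  | zero => simp
  | succ m ih =>
    have hins : Finset.Icc (-((m+1:ℕ):ℤ)) ((m+1:ℕ):ℤ)
        = insert (-((m+1:ℕ):ℤ)) (insert ((m+1:ℕ):ℤ) (Finset.Icc (-(m:ℤ)) (m:ℤ))) := by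
      ext x
      simp only [Finset.mem_Icc, Finset.mem_insert]
      push_cast
      omega
    rw [hins, Finset.sum_insert, Finset.sum_insert, ih]
    · rw [Int.negOnePow_neg, Int.coe_negOnePow_natCast]
      rw [pow_succ]
      ring
    · simp only [Finset.mem_Icc]; push_cast; omega
    · simp only [Finset.mem_insert, Finset.mem_Icc]; push_cast; omega

private lemma bgaux_count (n : ℕ) (hn : 1 ≤ n)
    [DecidablePred (fun d : Fin n → ℤ => Even (∑ v, d v))] :
    ((Fintype.piFinset (fun _ : Fin n => Finset.Icc (-(n:ℤ)+1) ((n:ℤ)-1))).filter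
      (fun d => Even (∑ v, d v))).card = ((2*n-1)^n + 1)/2 := by
  classical
  have hIccCard : (Finset.Icc (-(n:ℤ)+1) ((n:ℤ)-1)).card = 2*n-1 := by
    rw [Int.card_Icc]
    omega
  set F := Fintype.piFinset (fun _ : Fin n => Finset.Icc (-(n:ℤ)+1) ((n:ℤ)-1)) with hF
  set Ae := F.filter (fun d => Even (∑ v, d v)) with hAe
  set Ao := F.filter (fun d => ¬ Even (∑ v, d v)) with hAo
  have hT : ∑ d ∈ F, (((∑ v, d v).negOnePow : ℤˣ) : ℤ) = 1 := by
    have h1 : ∑ d ∈ F, (((∑ v, d v).negOnePow : ℤˣ) : ℤ)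
        = ∑ d ∈ F, ∏ v : Fin n, (((d v).negOnePow : ℤˣ) : ℤ) :=
      Finset.sum_congr rfl (fun d _ => bgaux_negOnePow_sum _ _)
    rw [h1, hF, ← Finset.prod_univ_sum (fun _ : Fin n => Finset.Icc (-(n:ℤ)+1) ((n:ℤ)-1))
      (fun _ x => ((x.negOnePow : ℤˣ) : ℤ))]
    have hIcc : Finset.Icc (-(n:ℤ)+1) ((n:ℤ)-1)
        = Finset.Icc (-((n-1:ℕ):ℤ)) ((n-1:ℕ):ℤ) := by
      have : ((n-1:ℕ):ℤ) = (n:ℤ) - 1 := by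
        rw [Nat.cast_sub hn]; norm_num
      rw [this]; congr 1; ring
    rw [hIcc]
    rw [Finset.prod_congr rfl (fun v _ => bgaux_sum_negOnePow_Icc (n-1))]
    rw [Finset.prod_const, Finset.card_univ, Fintype.card_fin, ← pow_mul]
    apply Even.neg_one_pow
    have h := Nat.even_mul_succ_self (n-1)
    rwa [Nat.sub_add_cancel hn] at h
  have hsplit := Finset.sum_filter_add_sum_filter_not F (fun d => Even (∑ v, d v))
    (fun d => (((∑ v, d v).negOnePow : ℤˣ) : ℤ))
  have hevenpart : ∑ d ∈ Ae, (((∑ v, d v).negOnePow : ℤˣ) : ℤ) = (Ae.card : ℤ) := by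
    have h : ∀ d ∈ Ae, (((∑ v, d v).negOnePow : ℤˣ) : ℤ) = 1 := fun d hd => by
      rw [Int.negOnePow_even _ ((Finset.mem_filter.mp hd).2)]; rfl
    rw [Finset.sum_congr rfl h, Finset.sum_const]; simp
  have hoddpart : ∑ d ∈ Ao, (((∑ v, d v).negOnePow : ℤˣ) : ℤ) = -(Ao.card : ℤ) := by
    have h : ∀ d ∈ Ao, (((∑ v, d v).negOnePow : ℤˣ) : ℤ) = -1 := fun d hd => by
      rw [Int.negOnePow_odd _ (Int.not_even_iff_odd.mp (Finset.mem_filter.mp hd).2)]; rfl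
    rw [Finset.sum_congr rfl h, Finset.sum_const]; simp
  rw [← hAe, ← hAo] at hsplit
  rw [hevenpart, hoddpart, hT] at hsplit
  have hFcard : F.card = (2*n-1)^n := by
    rw [hF, Fintype.card_piFinset]
    rw [Finset.prod_congr rfl (fun v _ => hIccCard), Finset.prod_const, Finset.card_univ,
      Fintype.card_fin]
  have hAB : Ae.card + Ao.card = (2*n-1)^n := by
    rw [hAe, hAo, ← hFcard]
    exact Finset.card_filter_add_card_filter_not _
  clear_value F Ae Ao
  clear hF hAe hAo hT hevenpart hoddpart hFcard hIccCard
  omega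

/-- The number of distinct net-degree sequences of bidirected graphs on `n ≥ 1` labelled
vertices is `((2n−1)^n + 1)/2`. -/
theorem card_netDegree_sequences_bigraphs (n : ℕ) (hn : 1 ≤ n) :
    {d : Fin n → ℤ | ∃ B : Bigraph n, B.netDeg = d}.ncard =
      ((2 * n - 1) ^ n + 1) / 2 := by
  classical
  have hset : {d : Fin n → ℤ | ∃ B : Bigraph n, B.netDeg = d}
      = ↑((Fintype.piFinset (fun _ : Fin n => Finset.Icc (-(n:ℤ)+1) ((n:ℤ)-1))).filter
        (fun d => Even (∑ v, d v))) := by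
    ext d
    simp only [Set.mem_setOf_eq, Finset.coe_filter, Fintype.mem_piFinset, Finset.mem_Icc,
      Set.mem_setOf_eq]
    constructor
    · rintro ⟨B, rfl⟩
      exact ⟨fun v => ⟨bgaux_netDeg_ge B v, bgaux_netDeg_le B v⟩, bgaux_even_sum_netDeg B⟩
    · rintro ⟨h1, h2⟩
      exact bgaux_exists_bigraph d (fun v => h1 v) h2
  rw [hset, Set.ncard_coe_finset, bgaux_count n hn]
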